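/- Consider the Poisson birth-death process on X = ℕ₀ with intensity λ > 0: k(x,x+1) = λ, k(x,x−1) = x, and k(x,y) = 0 for |x−y| > 1, x ≠ y; its reversible invariant probability measure has density π_λ(x) = λ^x e^{−λ}/x! with respect to the counting measure. For k ∈ ℕ let f_k(x) = e^{kx}/e^{λ(e^k−1)}. Then f_k ∈ P_*(X), Ent_μ(f_k) = λ(k e^k − e^k + 1), and I(f_k) = λ k (e^k − 1); in particular Ent_μ(f_k)/I(f_k) → 1 as k → ∞. Consequently, for every growth function Φ with lim_{r→∞} Φ(r)/r = 0, the generator L does not satisfy the entropy-information inequality EI(Φ). -/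

import Mathlib

open Real Filter MeasureTheory Set

/-- `M₁(x) = ∑_{y ≠ x} k(x,y)`. -/
noncomputable def M1fn {X : Type*} (k : X → X → ℝ) (x : X) : ℝ :=
  ∑' y : {y : X // y ≠ x}, k x y

/-- The standing assumptions on the transition rates and the invariant probability
measure: nonnegative off-diagonal rates, summable rows, `k(x,x) = -M₁(x)`,
a strictly positive probability density and detailed balance. -/
def MarkovSetting {X : Type*} (k : X → X → ℝ) (μ : X → ℝ) : Prop :=
  (∀ x y, x ≠ y → 0 ≤ k x y) ∧
  (∀ x : X, Summable fun y : {y : X // y ≠ x} => k x y) ∧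
  (∀ x : X, k x x = -M1fn k x) ∧
  (∀ x, 0 < μ x) ∧ (∑' x, μ x) = 1 ∧
  (∀ x y, μ x * k x y = μ y * k y x)

/-- The entropy `Ent_μ(f)`. -/
noncomputable def entFn {X : Type*} (μ f : X → ℝ) : ℝ :=
  (∑' x, f x * Real.log (f x) * μ x) -
    (∑' x, f x * μ x) * Real.log (∑' x, f x * μ x)

/-- The Fisher information `I(f) = (1/2) ∑_{x,y} k(x,y)(f(y)-f(x))(log f(y)-log f(x)) μ(x)`. -/
noncomputable def fisherFn {X : Type*} (k : X → X → ℝ) (μ f : X → ℝ) : ℝ :=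
  (1/2) * ∑' p : X × X,
    k p.1 p.2 * (f p.2 - f p.1) * (Real.log (f p.2) - Real.log (f p.1)) * μ p.1

/-- Finiteness of the Fisher information. -/
def FisherFinite {X : Type*} (k : X → X → ℝ) (μ f : X → ℝ) : Prop :=
  Summable fun p : X × X =>
    k p.1 p.2 * (f p.2 - f p.1) * (Real.log (f p.2) - Real.log (f p.1)) * μ p.1

/-- A growth function: strictly increasing, concave, `C¹` and positive on `(0,∞)`. -/
def GrowthFun (Φ : ℝ → ℝ) : Prop :=
  StrictMonoOn Φ (Ioi 0) ∧ ConcaveOn ℝ (Ioi 0) Φ ∧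
    ContDiffOn ℝ 1 Φ (Ioi 0) ∧ ∀ r : ℝ, 0 < r → 0 < Φ r

/-- The entropy-information inequality `EI(Φ)`:
`Ent_μ(f) ≤ Φ(I(f))` for all probability densities `f ∈ P_*(X)` with finite entropy
and finite Fisher information. -/
def EIineq {X : Type*} (k : X → X → ℝ) (μ : X → ℝ) (Φ : ℝ → ℝ) : Prop :=
  ∀ f : X → ℝ, (∀ x, 0 < f x) → (∑' x, f x * μ x) = 1 →
    (Summable fun x => f x * Real.log (f x) * μ x) →
    FisherFinite k μ f →
    entFn μ f ≤ Φ (fisherFn k μ f)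

/-- The transition kernel of the birth-death process in the Poisson case with
intensity `λ`: `k(x,x+1) = λ`, `k(x,x-1) = x`, `k(x,x) = -(λ+x)` and `0` otherwise. -/
noncomputable def kPoisson (lam : ℝ) : ℕ → ℕ → ℝ := fun x y =>
  if y = x + 1 then lam
  else if y + 1 = x then (x : ℝ)
  else if y = x then -(lam + (x : ℝ))
  else 0

/-- The Poisson density `π_λ(x) = λ^x e^{-λ}/x!`. -/
noncomputable def piPoisson (lam : ℝ) (x : ℕ) : ℝ :=
  lam ^ x * Real.exp (-lam) / (Nat.factorial x : ℝ)

/-- The test functions `f_k(x) = e^{kx}/e^{λ(e^k-1)}`. -/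
noncomputable def fPoisson (lam : ℝ) (kk : ℕ) (x : ℕ) : ℝ :=
  Real.exp ((kk : ℝ) * (x : ℝ)) / Real.exp (lam * (Real.exp (kk : ℝ) - 1))


section Stmt16Helpers

lemma stmt16_tsum_pow_div_fact (m : ℝ) :
    ∑' x : ℕ, m ^ x / (Nat.factorial x : ℝ) = Real.exp m := by
  rw [Real.exp_eq_exp_ℝ, NormedSpace.exp_eq_tsum_div]

lemma stmt16_summable_piP (m : ℝ) : Summable (piPoisson m) := by
  have := (Real.summable_pow_div_factorial m).mul_right (Real.exp (-m))
  apply this.congr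
  intro x; unfold piPoisson; ring

lemma stmt16_tsum_piP (m : ℝ) : ∑' x, piPoisson m x = 1 := by
  have h : ∀ x : ℕ, piPoisson m x = m ^ x / (Nat.factorial x : ℝ) * Real.exp (-m) := by
    intro x; unfold piPoisson; ring
  rw [tsum_congr h, tsum_mul_right, stmt16_tsum_pow_div_fact, ← Real.exp_add]
  simp

lemma stmt16_succ_piP (m : ℝ) (x : ℕ) :
    ((x:ℝ)+1) * piPoisson m (x+1) = m * piPoisson m x := by
  unfold piPoisson
  rw [Nat.factorial_succ]
  have h1 : ((x:ℕ).factorial : ℝ) ≠ 0 := Nat.cast_ne_zero.mpr (Nat.factorial_ne_zero _)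
  have h2 : ((x:ℝ)+1) ≠ 0 := by positivity
  push_cast
  field_simp
  ring

lemma stmt16_summable_id_piP (m : ℝ) : Summable (fun x : ℕ => (x:ℝ) * piPoisson m x) := by
  apply (summable_nat_add_iff 1).1
  push_cast
  rw [show (fun n : ℕ => ((n:ℝ)+1) * piPoisson m (n+1)) = fun n => m * piPoisson m n from by
    funext n; exact stmt16_succ_piP m n]
  exact (stmt16_summable_piP m).mul_left m

lemma stmt16_tsum_id_piP (m : ℝ) : ∑' x : ℕ, (x:ℝ) * piPoisson m x = m := by
  rw [Summable.tsum_eq_zero_add (stmt16_summable_id_piP m)]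
  push_cast
  rw [tsum_congr (fun n : ℕ => stmt16_succ_piP m n), tsum_mul_left, stmt16_tsum_piP]
  simp

lemma stmt16_fmul (lam : ℝ) (kk x : ℕ) :
    fPoisson lam kk x * piPoisson lam x = piPoisson (lam * Real.exp (kk:ℝ)) x := by
  unfold fPoisson piPoisson
  have h1 : Real.exp ((kk:ℝ) * (x:ℝ)) = Real.exp (kk:ℝ) ^ x := by
    rw [mul_comm]
    exact Real.exp_nat_mul _ x
  have h2 : Real.exp (-lam)
      = Real.exp (-(lam * Real.exp (kk:ℝ))) * Real.exp (lam * (Real.exp (kk:ℝ) - 1)) := by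
    rw [← Real.exp_add]; congr 1; ring
  rw [h1, h2, mul_pow]
  have := Real.exp_ne_zero (lam * (Real.exp (kk:ℝ) - 1))
  field_simp

lemma stmt16_logf (lam : ℝ) (kk x : ℕ) :
    Real.log (fPoisson lam kk x) = (kk:ℝ)*(x:ℝ) - lam*(Real.exp (kk:ℝ) - 1) := by
  unfold fPoisson
  rw [Real.log_div (Real.exp_ne_zero _) (Real.exp_ne_zero _), Real.log_exp, Real.log_exp]

lemma stmt16_fsucc (lam : ℝ) (kk x : ℕ) :
    fPoisson lam kk (x+1) = Real.exp (kk:ℝ) * fPoisson lam kk x := by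
  unfold fPoisson
  push_cast
  rw [show (kk:ℝ) * ((x:ℝ)+1) = (kk:ℝ)*(x:ℝ) + (kk:ℝ) by ring, Real.exp_add]
  ring

lemma stmt16_fpos (lam : ℝ) (kk x : ℕ) : 0 < fPoisson lam kk x :=
  div_pos (Real.exp_pos _) (Real.exp_pos _)

lemma stmt16_kP1 (lam : ℝ) (x : ℕ) : kPoisson lam x (x+1) = lam := by simp [kPoisson]

lemma stmt16_kP2 (lam : ℝ) (x : ℕ) : kPoisson lam (x+1) x = ((x:ℝ)+1) := by
  unfold kPoisson
  rw [if_neg (by omega), if_pos rfl]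
  push_cast; ring

lemma stmt16_valA (lam : ℝ) (kk x : ℕ) :
    kPoisson lam x (x+1) * (fPoisson lam kk (x+1) - fPoisson lam kk x) *
      (Real.log (fPoisson lam kk (x+1)) - Real.log (fPoisson lam kk x)) * piPoisson lam x
    = lam * (kk:ℝ) * (Real.exp (kk:ℝ) - 1) * piPoisson (lam * Real.exp (kk:ℝ)) x := by
  rw [stmt16_kP1, stmt16_logf lam kk (x+1), stmt16_logf lam kk x, stmt16_fsucc,
    ← stmt16_fmul lam kk x]
  push_cast
  ring

lemma stmt16_valB (lam : ℝ) (kk x : ℕ) :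
    kPoisson lam (x+1) x * (fPoisson lam kk x - fPoisson lam kk (x+1)) *
      (Real.log (fPoisson lam kk x) - Real.log (fPoisson lam kk (x+1))) * piPoisson lam (x+1)
    = lam * (kk:ℝ) * (Real.exp (kk:ℝ) - 1) * piPoisson (lam * Real.exp (kk:ℝ)) x := by
  rw [stmt16_kP2, stmt16_logf lam kk (x+1), stmt16_logf lam kk x, stmt16_fsucc,
    ← stmt16_fmul lam kk x]
  push_cast
  linear_combination ((kk:ℝ) * (Real.exp (kk:ℝ) - 1) * fPoisson lam kk x) * stmt16_succ_piP lam x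

lemma stmt16_inj1 : Function.Injective (fun x : ℕ => ((x, x+1) : ℕ × ℕ)) := by
  intro a b h
  simpa using congrArg Prod.fst h

lemma stmt16_inj2 : Function.Injective (fun x : ℕ => ((x+1, x) : ℕ × ℕ)) := by
  intro a b h
  simpa using congrArg Prod.snd h

lemma stmt16_g1_zero (a : ℕ → ℝ) :
    ∀ p ∉ Set.range (fun x : ℕ => ((x, x+1) : ℕ × ℕ)),
      (if p.2 = p.1 + 1 then a p.1 else 0) = 0 := by
  rintro ⟨x, y⟩ hp
  apply if_neg
  intro h
  exact hp ⟨x, by simp [h.symm]⟩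

lemma stmt16_g2_zero (a : ℕ → ℝ) :
    ∀ p ∉ Set.range (fun x : ℕ => ((x+1, x) : ℕ × ℕ)),
      (if p.1 = p.2 + 1 then a p.2 else 0) = 0 := by
  rintro ⟨x, y⟩ hp
  apply if_neg
  intro h
  exact hp ⟨y, by simp [h.symm]⟩

lemma stmt16_summable_g1 (a : ℕ → ℝ) (ha : Summable a) :
    Summable (fun p : ℕ × ℕ => if p.2 = p.1 + 1 then a p.1 else 0) := by
  apply (stmt16_inj1.summable_iff (stmt16_g1_zero a)).1
  apply ha.congr
  intro x; simp

lemma stmt16_summable_g2 (a : ℕ → ℝ) (ha : Summable a) :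
    Summable (fun p : ℕ × ℕ => if p.1 = p.2 + 1 then a p.2 else 0) := by
  apply (stmt16_inj2.summable_iff (stmt16_g2_zero a)).1
  apply ha.congr
  intro x; simp

lemma stmt16_tsum_g1 (a : ℕ → ℝ) :
    ∑' p : ℕ × ℕ, (if p.2 = p.1 + 1 then a p.1 else 0) = ∑' x, a x := by
  rw [← stmt16_inj1.tsum_eq (Function.support_subset_iff'.2 (stmt16_g1_zero a))]
  exact tsum_congr fun x => by simp

lemma stmt16_tsum_g2 (a : ℕ → ℝ) :
    ∑' p : ℕ × ℕ, (if p.1 = p.2 + 1 then a p.2 else 0) = ∑' x, a x := by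
  rw [← stmt16_inj2.tsum_eq (Function.support_subset_iff'.2 (stmt16_g2_zero a))]
  exact tsum_congr fun x => by simp

lemma stmt16_decomp (lam : ℝ) (kk : ℕ) (p : ℕ × ℕ) :
    kPoisson lam p.1 p.2 * (fPoisson lam kk p.2 - fPoisson lam kk p.1) *
      (Real.log (fPoisson lam kk p.2) - Real.log (fPoisson lam kk p.1)) * piPoisson lam p.1
    = (if p.2 = p.1 + 1 then
        lam * (kk:ℝ) * (Real.exp (kk:ℝ) - 1) * piPoisson (lam * Real.exp (kk:ℝ)) p.1 else 0)
      + (if p.1 = p.2 + 1 then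
        lam * (kk:ℝ) * (Real.exp (kk:ℝ) - 1) * piPoisson (lam * Real.exp (kk:ℝ)) p.2 else 0) := by
  obtain ⟨x, y⟩ := p
  dsimp only
  by_cases h1 : y = x + 1
  · subst h1
    rw [if_pos rfl, if_neg (by omega), add_zero]
    exact stmt16_valA lam kk x
  · by_cases h2 : x = y + 1
    · subst h2
      rw [if_neg h1, if_pos rfl, zero_add]
      exact stmt16_valB lam kk y
    · rw [if_neg h1, if_neg h2, add_zero]
      by_cases h3 : y = x
      · subst h3; ring
      · have hk : kPoisson lam x y = 0 := by
          unfold kPoisson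
          rw [if_neg h1, if_neg (by omega), if_neg h3]
        rw [hk]; ring

end Stmt16Helpers

/-- Example 3.8: for the Poisson birth-death process one has
`Ent_μ(f_k) = λ(k e^k - e^k + 1)` and `I(f_k) = λ k (e^k - 1)`, so the ratio tends
to `1`; hence `EI(Φ)` fails for any growth function of sublinear growth. -/
theorem stmt_16 (lam : ℝ) (hlam : 0 < lam) :
    (∀ kk : ℕ,
      (∀ x : ℕ, 0 < fPoisson lam kk x)
      ∧ (∑' x : ℕ, fPoisson lam kk x * piPoisson lam x) = 1
      ∧ (Summable fun x : ℕ =>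
          fPoisson lam kk x * Real.log (fPoisson lam kk x) * piPoisson lam x)
      ∧ entFn (piPoisson lam) (fPoisson lam kk) =
          lam * ((kk : ℝ) * Real.exp (kk : ℝ) - Real.exp (kk : ℝ) + 1)
      ∧ FisherFinite (kPoisson lam) (piPoisson lam) (fPoisson lam kk)
      ∧ fisherFn (kPoisson lam) (piPoisson lam) (fPoisson lam kk) =
          lam * (kk : ℝ) * (Real.exp (kk : ℝ) - 1))
    ∧ Tendsto (fun kk : ℕ =>
        entFn (piPoisson lam) (fPoisson lam kk) /
          fisherFn (kPoisson lam) (piPoisson lam) (fPoisson lam kk)) atTop (nhds 1)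
    ∧ ∀ Φ : ℝ → ℝ, GrowthFun Φ → Tendsto (fun r => Φ r / r) atTop (nhds 0) →
        ¬ EIineq (kPoisson lam) (piPoisson lam) Φ := by
  have hexp : ∀ kk : ℕ, Real.exp (-(kk:ℝ)) = 1 / Real.exp (kk:ℝ) := by
    intro kk; rw [Real.exp_neg]; exact inv_eq_one_div _
  have main : ∀ kk : ℕ,
      (∀ x : ℕ, 0 < fPoisson lam kk x)
      ∧ (∑' x : ℕ, fPoisson lam kk x * piPoisson lam x) = 1
      ∧ (Summable fun x : ℕ =>
          fPoisson lam kk x * Real.log (fPoisson lam kk x) * piPoisson lam x)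
      ∧ entFn (piPoisson lam) (fPoisson lam kk) =
          lam * ((kk : ℝ) * Real.exp (kk : ℝ) - Real.exp (kk : ℝ) + 1)
      ∧ FisherFinite (kPoisson lam) (piPoisson lam) (fPoisson lam kk)
      ∧ fisherFn (kPoisson lam) (piPoisson lam) (fPoisson lam kk) =
          lam * (kk : ℝ) * (Real.exp (kk : ℝ) - 1) := by
    intro kk
    have hprob : (∑' x : ℕ, fPoisson lam kk x * piPoisson lam x) = 1 := by
      rw [tsum_congr (stmt16_fmul lam kk), stmt16_tsum_piP]
    have hent : ∀ x : ℕ, fPoisson lam kk x * Real.log (fPoisson lam kk x) * piPoisson lam x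
        = (kk:ℝ) * ((x:ℝ) * piPoisson (lam * Real.exp (kk:ℝ)) x)
          - (lam * (Real.exp (kk:ℝ) - 1)) * piPoisson (lam * Real.exp (kk:ℝ)) x := by
      intro x
      rw [show fPoisson lam kk x * Real.log (fPoisson lam kk x) * piPoisson lam x
          = Real.log (fPoisson lam kk x) * (fPoisson lam kk x * piPoisson lam x) from by ring,
        stmt16_fmul lam kk x, stmt16_logf]
      ring
    have hS1 : Summable (fun x : ℕ => (kk:ℝ) * ((x:ℝ) * piPoisson (lam * Real.exp (kk:ℝ)) x)) :=
      (stmt16_summable_id_piP _).mul_left _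
    have hS2 : Summable (fun x : ℕ =>
        (lam * (Real.exp (kk:ℝ) - 1)) * piPoisson (lam * Real.exp (kk:ℝ)) x) :=
      (stmt16_summable_piP _).mul_left _
    have hSent : Summable fun x : ℕ =>
        fPoisson lam kk x * Real.log (fPoisson lam kk x) * piPoisson lam x :=
      (hS1.sub hS2).congr fun x => (hent x).symm
    have hTent : (∑' x : ℕ, fPoisson lam kk x * Real.log (fPoisson lam kk x) * piPoisson lam x)
        = (kk:ℝ) * (lam * Real.exp (kk:ℝ)) - lam * (Real.exp (kk:ℝ) - 1) := by
      rw [tsum_congr hent, Summable.tsum_sub hS1 hS2, tsum_mul_left, tsum_mul_left,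
        stmt16_tsum_id_piP, stmt16_tsum_piP, mul_one]
    have hFF : FisherFinite (kPoisson lam) (piPoisson lam) (fPoisson lam kk) := by
      unfold FisherFinite
      have := (stmt16_summable_g1
            (fun x => lam * (kk:ℝ) * (Real.exp (kk:ℝ) - 1) * piPoisson (lam * Real.exp (kk:ℝ)) x)
            ((stmt16_summable_piP _).mul_left _)).add
          (stmt16_summable_g2
            (fun x => lam * (kk:ℝ) * (Real.exp (kk:ℝ) - 1) * piPoisson (lam * Real.exp (kk:ℝ)) x)
            ((stmt16_summable_piP _).mul_left _))
      exact this.congr fun p => (stmt16_decomp lam kk p).symm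
    refine ⟨stmt16_fpos lam kk, hprob, hSent, ?_, hFF, ?_⟩
    · unfold entFn
      rw [hprob, hTent, Real.log_one]
      ring
    · unfold fisherFn
      rw [tsum_congr (stmt16_decomp lam kk),
        Summable.tsum_add
          (stmt16_summable_g1 _ ((stmt16_summable_piP _).mul_left _))
          (stmt16_summable_g2 _ ((stmt16_summable_piP _).mul_left _)),
        stmt16_tsum_g1 (fun x => lam * (kk:ℝ) * (Real.exp (kk:ℝ) - 1)
          * piPoisson (lam * Real.exp (kk:ℝ)) x),
        stmt16_tsum_g2 (fun x => lam * (kk:ℝ) * (Real.exp (kk:ℝ) - 1)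
          * piPoisson (lam * Real.exp (kk:ℝ)) x),
        tsum_mul_left, stmt16_tsum_piP]
      ring
  have hratio : Tendsto (fun kk : ℕ =>
      entFn (piPoisson lam) (fPoisson lam kk) /
        fisherFn (kPoisson lam) (piPoisson lam) (fPoisson lam kk)) atTop (nhds 1) := by
    have hreal : Tendsto (fun t : ℝ =>
        (lam * (t * Real.exp t - Real.exp t + 1)) / (lam * t * (Real.exp t - 1)))
        atTop (nhds 1) := by
      have hnum : Tendsto (fun t : ℝ => 1 - 1/t + Real.exp (-t) * (1/t)) atTop (nhds 1) := by
        have h1 : Tendsto (fun t : ℝ => 1/t) atTop (nhds 0) := by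
          simpa [one_div] using tendsto_inv_atTop_zero
        have h2 : Tendsto (fun t : ℝ => Real.exp (-t) * (1/t)) atTop (nhds 0) := by
          simpa using (Real.tendsto_exp_neg_atTop_nhds_zero.mul h1)
        simpa using ((tendsto_const_nhds (x := (1:ℝ))).sub h1).add h2
      have hden : Tendsto (fun t : ℝ => 1 - Real.exp (-t)) atTop (nhds 1) := by
        simpa using (tendsto_const_nhds (x := (1:ℝ))).sub Real.tendsto_exp_neg_atTop_nhds_zero
      have hdiv : Tendsto (fun t : ℝ =>
          (1 - 1/t + Real.exp (-t) * (1/t)) / (1 - Real.exp (-t))) atTop (nhds 1) := by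
        have := hnum.div hden one_ne_zero; rw [div_one] at this; exact this
      apply hdiv.congr'
      filter_upwards [eventually_gt_atTop (0:ℝ)] with t ht
      have he : 1 < Real.exp t := by
        rw [show (1:ℝ) = Real.exp 0 from (Real.exp_zero).symm]
        exact Real.exp_lt_exp.2 ht
      have hne1 : Real.exp t - 1 ≠ 0 := by linarith
      have hne2 : t ≠ 0 := ne_of_gt ht
      have hne3 : Real.exp t ≠ 0 := Real.exp_ne_zero t
      rw [Real.exp_neg]
      field_simp
    have hcomp := hreal.comp tendsto_natCast_atTop_atTop
    apply hcomp.congr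
    intro kk
    simp only [Function.comp]
    rw [(main kk).2.2.2.1, (main kk).2.2.2.2.2]
  refine ⟨main, hratio, ?_⟩
  intro Φ hΦ hΦ0 hEI
  have hI : Tendsto (fun kk : ℕ => lam * (kk:ℝ) * (Real.exp (kk:ℝ) - 1)) atTop atTop := by
    have h1 : Tendsto (fun kk : ℕ => lam * (kk:ℝ)) atTop atTop :=
      (tendsto_natCast_atTop_atTop).const_mul_atTop hlam
    have h2 : Tendsto (fun kk : ℕ => Real.exp (kk:ℝ) - 1) atTop atTop := by
      have := Real.tendsto_exp_atTop.comp (tendsto_natCast_atTop_atTop (R := ℝ))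
      simpa [sub_eq_add_neg] using tendsto_atTop_add_const_right atTop (-1 : ℝ) this
    exact h1.atTop_mul_atTop₀ h2
  have hsmall : ∀ᶠ kk : ℕ in atTop,
      Φ (lam * (kk:ℝ) * (Real.exp (kk:ℝ) - 1)) / (lam * (kk:ℝ) * (Real.exp (kk:ℝ) - 1))
        < 1/2 :=
    hI.eventually (hΦ0.eventually (gt_mem_nhds (by norm_num)))
  have hpos : ∀ᶠ kk : ℕ in atTop, (0:ℝ) < lam * (kk:ℝ) * (Real.exp (kk:ℝ) - 1) :=
    hI.eventually (eventually_gt_atTop 0)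
  have hbig : ∀ᶠ kk : ℕ in atTop,
      1/2 < entFn (piPoisson lam) (fPoisson lam kk) /
        fisherFn (kPoisson lam) (piPoisson lam) (fPoisson lam kk) :=
    hratio.eventually (lt_mem_nhds (by norm_num))
  obtain ⟨kk, h1, h2, h3⟩ := (hsmall.and (hpos.and hbig)).exists
  have hfis := (main kk).2.2.2.2.2
  have hEle := hEI (fPoisson lam kk) (main kk).1 (main kk).2.1 (main kk).2.2.1 (main kk).2.2.2.2.1
  rw [hfis] at hEle
  rw [hfis] at h3
  have hE1 : (1/2) * (lam * (kk:ℝ) * (Real.exp (kk:ℝ) - 1))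
      < entFn (piPoisson lam) (fPoisson lam kk) := (lt_div_iff₀ h2).1 h3
  have hE2 : Φ (lam * (kk:ℝ) * (Real.exp (kk:ℝ) - 1))
      < (1/2) * (lam * (kk:ℝ) * (Real.exp (kk:ℝ) - 1)) := by
    have := (div_lt_iff₀ h2).1 h1
    linarith
  linarith
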